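/- Let G be a connected graph with σ₂(G) ≥ |V(G)| - k (k ≥ 2) and no spanning tree with at most k leaves, let P = z₀z₁…z_{2m} be a longest path with z₀ = u, z_{2m} = v, and suppose N(u) = N(v) = {z_{2j+1} : 0 ≤ j ≤ m-1}. Then the set {z_{2j} : 0 ≤ j ≤ m-1} of even-indexed vertices (excluding v) is an independent set in G. -/

import Mathlib

open SimpleGraph

/-- The degree of a vertex, as the cardinality of its neighbor set. -/
noncomputable def SimpleGraph.deg' {V : Type*} (G : SimpleGraph V) (u : V) : ℕ :=
  (G.neighborSet u).ncard

/-- `G` has a spanning tree with at most `k` leaves. -/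
def SimpleGraph.HasSpanningKEndedTree {V : Type*} (G : SimpleGraph V) (k : ℕ) : Prop :=
  ∃ T : SimpleGraph V, T ≤ G ∧ T.IsTree ∧ {x : V | (T.neighborSet x).ncard = 1}.ncard ≤ k


private lemma walk_of_chain {V : Type*} {G : SimpleGraph V} :
    ∀ (l : List V) (a : V), List.Chain G.Adj a l →
      ∃ (b : V) (q : G.Walk a b), q.support = a :: l
  | [], a, _ => ⟨a, Walk.nil, by simp⟩
  | x :: t, a, h => by
    rw [List.Chain, List.chain_cons] at h
    obtain ⟨b, q, hq⟩ := walk_of_chain t x h.2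
    exact ⟨b, Walk.cons h.1 q, by simp [hq]⟩

private lemma exists_path_of_list {V : Type*} {G : SimpleGraph V} {l : List V} (hne : l ≠ [])
    (hc : l.Chain' G.Adj) (hn : l.Nodup) :
    ∃ (a b : V) (q : G.Walk a b), q.IsPath ∧ q.length + 1 = l.length := by
  obtain ⟨a, t, rfl⟩ := List.exists_cons_of_ne_nil hne
  obtain ⟨b, q, hq⟩ := walk_of_chain t a hc
  refine ⟨a, b, q, ?_, ?_⟩
  · rw [Walk.isPath_def, hq]; exact hn
  · rw [← Walk.length_support, hq]

private lemma support_getElem_eq_getVert {V : Type*} {G : SimpleGraph V} {u v : V}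
    (p : G.Walk u v) : ∀ (t : ℕ) (h : t < p.support.length), p.support[t] = p.getVert t := by
  induction p with
  | nil =>
    intro t h
    simp only [Walk.support_nil, List.length_singleton] at h
    interval_cases t <;> simp [Walk.support_nil]
  | cons hadj q ih =>
    intro t h
    cases t with
    | zero => simp [Walk.support_cons]
    | succ n =>
      simp only [Walk.support_cons, List.getElem_cons_succ, Walk.getVert_cons_succ]
      exact ih n (by rw [Walk.support_cons] at h; simpa using h)

private lemma mem_of_walk {V : Type*} {H : SimpleGraph V} {S : Set V}
    (hS : ∀ {x y : V}, H.Adj x y → x ∈ S → y ∈ S) :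
    ∀ {a b : V}, H.Walk a b → a ∈ S → b ∈ S := by
  intro a b w
  induction w with
  | nil => exact id
  | cons hadj q ih => exact fun ha => ih (hS hadj ha)

private lemma exists_crossing_edge {V : Type*} {G : SimpleGraph V} (hconn : G.Preconnected)
    {a w0 : V} (S : Set V) (ha : a ∈ S) (hw : w0 ∉ S) :
    ∃ x ∈ S, ∃ y, y ∉ S ∧ G.Adj x y := by
  by_contra hno
  push_neg at hno
  refine hw (mem_of_walk (fun {x y} hadj hx => ?_) (hconn a w0).some ha)
  by_contra hy
  exact (hno x hx y hy) hadj

private lemma exists_path_succ_of_cycle {V : Type*} {G : SimpleGraph V} (v₀ : V) {C : List V}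
    (hN : 1 < C.length) (hchain : C.Chain' G.Adj)
    (hclose : G.Adj (C.getD (C.length - 1) v₀) (C.getD 0 v₀))
    (hnodup : C.Nodup) {x w : V} (hx : x ∈ C) (hw : w ∉ C) (hxw : G.Adj x w) :
    ∃ (a b : V) (q : G.Walk a b), q.IsPath ∧ q.length = C.length := by
  set N := C.length with hNdef
  have hN0 : 0 < N := by omega
  obtain ⟨s, hsN, hsx⟩ := List.mem_iff_getElem.mp hx
  set d : ℕ → V := fun t => C.getD ((s + 1 + t) % N) v₀ with hd
  have hgetD : ∀ {n : ℕ} (h : n < N), C.getD n v₀ = C[n]'h := fun {n} h =>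
    List.getD_eq_getElem C v₀ h
  -- consecutive adjacency within C
  have hidx : ∀ t, t + 1 < N → G.Adj (C.getD t v₀) (C.getD (t + 1) v₀) := by
    intro t ht
    rw [hgetD (by omega), hgetD ht]
    have := List.isChain_iff_getElem.mp hchain t (by omega)
    simpa using this
  -- cyclic adjacency
  have hcyc : ∀ a : ℕ, G.Adj (C.getD (a % N) v₀) (C.getD ((a + 1) % N) v₀) := by
    intro a
    have hr : a % N < N := Nat.mod_lt _ hN0
    rcases lt_or_ge (a % N) (N - 1) with hlt | hge
    · have h1 : (a + 1) % N = a % N + 1 := by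
        rw [Nat.add_mod, Nat.mod_eq_of_lt (a := 1) hN, Nat.mod_eq_of_lt (by omega)]
      rw [h1]; exact hidx _ (by omega)
    · have heq : a % N = N - 1 := by omega
      have h1 : (a + 1) % N = 0 := by
        rw [Nat.add_mod, Nat.mod_eq_of_lt (a := 1) hN, heq, show N - 1 + 1 = N by omega,
          Nat.mod_self]
      rw [heq, h1]; exact hclose
  have hdlast : d (N - 1) = x := by
    rw [hd]
    simp only
    rw [show s + 1 + (N - 1) = s + N by omega, Nat.add_mod_right, Nat.mod_eq_of_lt hsN,
      hgetD hsN, hsx]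
  have hdmem : ∀ t, d t ∈ C := by
    intro t
    rw [hd]; simp only
    rw [hgetD (Nat.mod_lt _ hN0)]
    exact List.getElem_mem _
  have hdinj : ∀ t1 ∈ List.range N, ∀ t2 ∈ List.range N, d t1 = d t2 → t1 = t2 := by
    intro t1 ht1 t2 ht2 h
    rw [List.mem_range] at ht1 ht2
    rw [hd] at h; simp only at h
    rw [hgetD (Nat.mod_lt _ hN0), hgetD (Nat.mod_lt _ hN0)] at h
    have hmod : (s + 1 + t1) % N = (s + 1 + t2) % N := hnodup.getElem_inj_iff.mp h
    have : t1 % N = t2 % N := Nat.ModEq.add_left_cancel' (s + 1) hmod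
    rwa [Nat.mod_eq_of_lt ht1, Nat.mod_eq_of_lt ht2] at this
  -- the long list
  obtain ⟨n, hn⟩ : ∃ n, N = n + 1 := ⟨N - 1, by omega⟩
  set Q : List V := (List.range N).map d ++ [w] with hQ
  have hQchain : Q.Chain' G.Adj := by
    rw [hQ, List.Chain', List.isChain_append]
    refine ⟨?_, List.isChain_singleton w, ?_⟩
    · rw [hn, List.isChain_map, List.isChain_range_succ]
      intro t _
      exact hcyc (s + 1 + t)
    · intro a ha b hb
      rw [hn, List.range_succ, List.map_append, List.map_singleton, List.getLast?_concat] at ha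
      simp only [Option.mem_def, Option.some.injEq] at ha
      simp only [List.head?_cons, Option.mem_def, Option.some.injEq] at hb
      subst ha; subst hb
      have : d n = x := by rw [← hdlast, hn]; norm_num
      rw [this]; exact hxw
  have hQnodup : Q.Nodup := by
    rw [hQ, List.nodup_append]
    refine ⟨(List.nodup_range (n := N)).map_on hdinj, List.nodup_singleton w, ?_⟩
    intro a ha b hb hab
    simp only [List.mem_singleton] at hb
    subst hb
    subst hab
    obtain ⟨t, _, rfl⟩ := List.mem_map.mp ha
    exact hw (hdmem t)
  have hQne : Q ≠ [] := by rw [hQ]; simp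
  obtain ⟨a, b, q, hq, hqlen⟩ := exists_path_of_list hQne hQchain hQnodup
  refine ⟨a, b, q, hq, ?_⟩
  rw [hQ] at hqlen
  simp only [List.length_append, List.length_map, List.length_range, List.length_singleton]
    at hqlen
  omega

private lemma getVert_injOn {V : Type*} {G : SimpleGraph V} {u v : V} {p : G.Walk u v}
    (hp : p.IsPath) {s t : ℕ} (hs : s ≤ p.length) (ht : t ≤ p.length)
    (h : p.getVert s = p.getVert t) : s = t := by
  have hlen : p.support.length = p.length + 1 := Walk.length_support p
  rw [← support_getElem_eq_getVert p s (by omega), ← support_getElem_eq_getVert p t (by omega)]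
    at h
  exact ((Walk.isPath_def p).mp hp).getElem_inj_iff.mp h

private lemma hasSpanningTree_of_spanning_path {V : Type*} [Fintype V] {G : SimpleGraph V}
    {k : ℕ} (hk : 2 ≤ k) {u v : V} (p : G.Walk u v) (hp : p.IsPath)
    (hspan : ∀ x : V, x ∈ p.support) : G.HasSpanningKEndedTree k := by
  classical
  set T : SimpleGraph V := p.toSubgraph.spanningCoe with hT
  have hTadj : ∀ {a b : V}, T.Adj a b ↔ p.toSubgraph.Adj a b := Iff.rfl
  have hTconn : T.Connected := by
    rw [connected_iff]
    refine ⟨fun x y => ?_, ⟨u⟩⟩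
    have hx : x ∈ p.toSubgraph.verts := by rw [Walk.verts_toSubgraph]; exact hspan x
    have hy : y ∈ p.toSubgraph.verts := by rw [Walk.verts_toSubgraph]; exact hspan y
    have hr := p.toSubgraph_connected.preconnected ⟨x, hx⟩ ⟨y, hy⟩
    exact hr.map ⟨Subtype.val, fun {a b} h => h⟩
  have hacyc : T.IsAcyclic := by
    rw [isAcyclic_iff_forall_adj_isBridge]
    intro a b hab
    obtain ⟨i, hi, hilen⟩ := (Walk.toSubgraph_adj_iff p).mp hab
    rw [← hi]
    -- prove every consecutive edge is a bridge
    rw [isBridge_iff]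
    set S : Set V := {y | ∃ t, t ≤ i ∧ y = p.getVert t} with hS
    have hSclosed : ∀ {x y : V},
        (T \ fromEdgeSet {s(p.getVert i, p.getVert (i + 1))}).Adj x y → x ∈ S → y ∈ S := by
      intro x y hxy hxS
      obtain ⟨t, hti, rfl⟩ := hxS
      have h1 : T.Adj (p.getVert t) y := hxy.1
      have h2 : s(p.getVert t, y) ≠ s(p.getVert i, p.getVert (i + 1)) := by
        intro h
        exact hxy.2 ((SimpleGraph.fromEdgeSet_adj _).mpr ⟨by rw [h]; exact rfl, h1.ne⟩)
      obtain ⟨j, hj, hjlen⟩ := (Walk.toSubgraph_adj_iff p).mp h1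
      have hji : j ≠ i := by
        intro h; subst h; exact h2 hj.symm
      rw [Sym2.eq_iff] at hj
      rcases hj with ⟨hj1, hj2⟩ | ⟨hj1, hj2⟩
      · have : j = t := getVert_injOn hp (by omega) (by omega) hj1
        exact ⟨j + 1, by omega, hj2.symm⟩
      · have : j + 1 = t := getVert_injOn hp (by omega) (by omega) hj2
        exact ⟨j, by omega, hj1.symm⟩
    intro hreach
    obtain ⟨wk⟩ := hreach
    have hbS : p.getVert (i + 1) ∈ S := mem_of_walk hSclosed wk ⟨i, le_refl i, rfl⟩
    obtain ⟨t, hti, ht⟩ := hbS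
    have : i + 1 = t := getVert_injOn hp (by omega) (by omega) ht
    omega
  refine ⟨T, p.toSubgraph.spanningCoe_le, ⟨hTconn, hacyc⟩, ?_⟩
  have hsub : {x : V | (T.neighborSet x).ncard = 1} ⊆ {u, v} := by
    intro x hx
    by_contra hxuv
    simp only [Set.mem_insert_iff, Set.mem_singleton_iff, not_or] at hxuv
    obtain ⟨t, hxt, htle⟩ := Walk.mem_support_iff_exists_getVert.mp (hspan x)
    have ht0 : t ≠ 0 := by
      intro h; subst h; exact hxuv.1 (by rw [← hxt, Walk.getVert_zero])
    have htl : t ≠ p.length := by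
      intro h; subst h; exact hxuv.2 (by rw [← hxt, Walk.getVert_length])
    subst hxt
    have h1 : p.getVert (t - 1) ∈ T.neighborSet (p.getVert t) := by
      have := p.toSubgraph_adj_getVert (i := t - 1) (by omega)
      rw [show t - 1 + 1 = t by omega] at this
      exact this.symm
    have h2 : p.getVert (t + 1) ∈ T.neighborSet (p.getVert t) := by
      exact p.toSubgraph_adj_getVert (by omega)
    have hne12 : p.getVert (t - 1) ≠ p.getVert (t + 1) := by
      intro h
      have := getVert_injOn hp (s := t - 1) (t := t + 1) (by omega) (by omega) h
      omega
    have hle : ({p.getVert (t - 1), p.getVert (t + 1)} : Set V).ncard ≤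
        (T.neighborSet (p.getVert t)).ncard := by
      refine Set.ncard_le_ncard ?_ (Set.toFinite _)
      rintro y (rfl | rfl)
      · exact h1
      · exact h2
    rw [Set.ncard_pair hne12] at hle
    rw [Set.mem_setOf_eq] at hx
    omega
  calc {x : V | (T.neighborSet x).ncard = 1}.ncard ≤ ({u, v} : Set V).ncard :=
        Set.ncard_le_ncard hsub (Set.toFinite _)
    _ ≤ 2 := by
        have := Set.ncard_insert_le u ({v} : Set V)
        simpa using this
    _ ≤ k := hk

theorem stmt_16 {V : Type*} [Fintype V] (G : SimpleGraph V) (k : ℕ) (hk : 2 ≤ k)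
    (hconn : G.Connected)
    (hσ : ∀ u v : V, u ≠ v → ¬G.Adj u v →
      (Fintype.card V : ℤ) - k ≤ (G.deg' u : ℤ) + (G.deg' v : ℤ))
    (hnotree : ¬G.HasSpanningKEndedTree k)
    (u v : V) (p : G.Walk u v) (hp : p.IsPath)
    (hlongest : ∀ (a b : V) (q : G.Walk a b), q.IsPath → q.length ≤ p.length)
    (m : ℕ) (hlen : p.support.length = 2 * m + 1)
    (hNu : G.neighborSet u = G.neighborSet v)
    (hNv : G.neighborSet v =
      {x : V | ∃ j : ℕ, j < m ∧ ∃ h : 2 * j + 1 < p.support.length,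
        x = p.support[2 * j + 1]'h}) :
    ∀ i j : ℕ, i < m → j < m → (hi : 2 * i < p.support.length) →
      (hj : 2 * j < p.support.length) →
      ¬G.Adj (p.support[2 * i]'hi) (p.support[2 * j]'hj) := by
  classical
  have hplen : p.length = 2 * m := by have := Walk.length_support p; omega
  have hz0 : p.getVert 0 = u := Walk.getVert_zero p
  have hzv : p.getVert (2 * m) = v := by rw [← hplen]; exact p.getVert_length
  have hcons : ∀ t, t < 2 * m → G.Adj (p.getVert t) (p.getVert (t + 1)) := fun t ht =>
    p.adj_getVert_succ (by omega)
  have hoddv : ∀ t, t < m → G.Adj v (p.getVert (2 * t + 1)) := by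
    intro t ht
    have hmem : p.getVert (2 * t + 1) ∈ G.neighborSet v := by
      rw [hNv]
      exact ⟨t, ht, by omega, (support_getElem_eq_getVert p _ (by omega)).symm⟩
    exact hmem
  have hoddu : ∀ t, t < m → G.Adj u (p.getVert (2 * t + 1)) := by
    intro t ht
    have hmem : p.getVert (2 * t + 1) ∈ G.neighborSet v := hoddv t ht
    rw [← hNu] at hmem
    exact hmem
  -- the key asymmetric claim
  suffices key : ∀ i j : ℕ, i < j → j < m →
      ¬ G.Adj (p.getVert (2 * i)) (p.getVert (2 * j)) by
    intro i j him hjm hi hj hadj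
    rw [support_getElem_eq_getVert p _ hi, support_getElem_eq_getVert p _ hj] at hadj
    rcases lt_trichotomy i j with h | h | h
    · exact key i j h hjm hadj
    · subst h; exact G.loopless.irrefl _ hadj
    · exact key j i h him hadj.symm
  intro i j hij hjm hadj
  set f : ℕ → ℕ := fun t =>
    if t = 0 then 0
    else if t ≤ 2 * j - 1 - 2 * i then 2 * i + t
    else if t ≤ 2 * m - 2 * i then 2 * m + 2 * j - 2 * i - t
    else 2 * m + 1 - t with hf
  have hfbound : ∀ t, f t ≤ 2 * m := by
    intro t; simp only [hf]; split_ifs <;> first | exact ‹False›.elim | omega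
  have hfinj : ∀ s t, s ≤ 2 * m → t ≤ 2 * m → f s = f t → s = t := by
    intro s t hs ht h; simp only [hf] at h; split_ifs at h <;> omega
  set z : ℕ → V := fun t => p.getVert t with hzdef
  set C : List V := (List.range (2 * m + 1)).map (fun t => z (f t)) with hC
  have hClen : C.length = 2 * m + 1 := by rw [hC]; simp
  have hCget : ∀ t, t < 2 * m + 1 → C.getD t u = z (f t) := by
    intro t ht
    rw [hC, List.getD_eq_getElem _ _ (by simpa using ht)]
    simp
  have hzinj : ∀ s t, s ≤ 2 * m → t ≤ 2 * m → z s = z t → s = t := by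
    intro s t hs ht h
    exact getVert_injOn hp (by omega) (by omega) h
  -- chain adjacency along C
  have hCchain : C.Chain' G.Adj := by
    rw [hC, show 2 * m + 1 = 2 * m + 1 from rfl, List.Chain', List.isChain_map, List.isChain_range_succ]
    intro t ht
    by_cases h0 : t = 0
    · subst h0
      have e1 : f 0 = 0 := by simp [hf]
      have e2 : f 1 = 2 * i + 1 := by simp only [hf]; split_ifs <;> first | exact ‹False›.elim | omega
      rw [e1, e2]
      show G.Adj (p.getVert 0) (p.getVert (2 * i + 1))
      rw [hz0]
      exact hoddu i (by omega)
    · by_cases h1 : t + 1 ≤ 2 * j - 1 - 2 * i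
      · have e1 : f t = 2 * i + t := by simp only [hf]; split_ifs <;> first | exact ‹False›.elim | omega
        have e2 : f (t + 1) = 2 * i + t + 1 := by simp only [hf]; split_ifs <;> first | exact ‹False›.elim | omega
        rw [e1, e2]
        exact hcons (2 * i + t) (by omega)
      · by_cases h2 : t + 1 ≤ 2 * j - 2 * i
        · have e1 : f t = 2 * (j - 1) + 1 := by simp only [hf]; split_ifs <;> first | exact ‹False›.elim | omega
          have e2 : f (t + 1) = 2 * m := by simp only [hf]; split_ifs <;> first | exact ‹False›.elim | omega
          rw [e1, e2]
          show G.Adj (p.getVert (2 * (j - 1) + 1)) (p.getVert (2 * m))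
          rw [hzv]
          exact (hoddv (j - 1) (by omega)).symm
        · by_cases h3 : t + 1 ≤ 2 * m - 2 * i
          · have e1 : f t = (2 * m + 2 * j - 2 * i - (t + 1)) + 1 := by
              simp only [hf]; split_ifs <;> first | exact ‹False›.elim | omega
            have e2 : f (t + 1) = 2 * m + 2 * j - 2 * i - (t + 1) := by
              simp only [hf]; split_ifs <;> first | exact ‹False›.elim | omega
            rw [e1, e2]
            exact (hcons _ (by omega)).symm
          · by_cases h4 : t ≤ 2 * m - 2 * i
            · have e1 : f t = 2 * j := by simp only [hf]; split_ifs <;> first | exact ‹False›.elim | omega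
              have e2 : f (t + 1) = 2 * i := by simp only [hf]; split_ifs <;> first | exact ‹False›.elim | omega
              rw [e1, e2]
              exact hadj.symm
            · have e1 : f t = (2 * m - t) + 1 := by simp only [hf]; split_ifs <;> first | exact ‹False›.elim | omega
              have e2 : f (t + 1) = 2 * m - t := by simp only [hf]; split_ifs <;> first | exact ‹False›.elim | omega
              rw [e1, e2]
              exact (hcons _ (by omega)).symm
  have hCclose : G.Adj (C.getD (C.length - 1) u) (C.getD 0 u) := by
    rw [hClen]
    rw [hCget _ (by omega), hCget _ (by omega)]
    have e0 : f 0 = 0 := by simp [hf]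
    rw [e0]
    show G.Adj (z (f (2 * m))) (p.getVert 0)
    rw [hz0]
    by_cases hi0 : i = 0
    · have e1 : f (2 * m) = 2 * j := by simp only [hf]; split_ifs <;> first | exact ‹False›.elim | omega
      rw [e1]
      have : p.getVert (2 * i) = u := by rw [hi0]; simpa using hz0
      rw [← this]
      exact hadj.symm
    · have e1 : f (2 * m) = 2 * 0 + 1 := by simp only [hf]; split_ifs <;> first | exact ‹False›.elim | omega
      rw [e1]
      exact (hoddu 0 (by omega)).symm
  have hCnodup : C.Nodup := by
    rw [hC]
    refine (List.nodup_range).map_on ?_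
    intro t1 ht1 t2 ht2 h
    rw [List.mem_range] at ht1 ht2
    have := hzinj (f t1) (f t2) (hfbound t1) (hfbound t2) h
    exact hfinj t1 t2 (by omega) (by omega) this
  have hCsub : ∀ y ∈ C, y ∈ p.support := by
    intro y hy
    rw [hC, List.mem_map] at hy
    obtain ⟨t, _, rfl⟩ := hy
    exact Walk.mem_support_iff_exists_getVert.mpr ⟨f t, rfl, by rw [hplen]; exact hfbound t⟩
  -- case split on whether p is spanning
  by_cases hspan : ∀ x : V, x ∈ p.support
  · exact hnotree (hasSpanningTree_of_spanning_path hk p hp hspan)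
  · push_neg at hspan
    obtain ⟨w0, hw0⟩ := hspan
    obtain ⟨x, hxS, y, hyS, hxy⟩ :=
      exists_crossing_edge hconn.preconnected {x | x ∈ p.support} p.start_mem_support hw0
    -- x ∈ C via toFinset cardinality
    have hxC : x ∈ C := by
      have h1 : C.toFinset ⊆ p.support.toFinset := by
        intro a ha
        rw [List.mem_toFinset] at ha ⊢
        exact hCsub a ha
      have h2 : p.support.toFinset.card ≤ C.toFinset.card := by
        rw [List.toFinset_card_of_nodup hCnodup,
          List.toFinset_card_of_nodup ((Walk.isPath_def p).mp hp), hClen, hlen]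
      have := Finset.eq_of_subset_of_card_le h1 h2
      rw [← List.mem_toFinset, this, List.mem_toFinset]
      exact hxS
    have hyC : y ∉ C := fun h => hyS (hCsub y h)
    obtain ⟨a, b, q, hq, hqlen⟩ :=
      exists_path_succ_of_cycle u (by omega) hCchain hCclose hCnodup hxC hyC hxy
    have := hlongest a b q hq
    rw [hqlen, hClen, hplen] at this
    omega
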